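/- Let X be a compact a-space with denominator function ζ. Then the unital Abelian lattice-ordered group C(X) of a-maps X → (ℝ,den) is metrically complete: it is Archimedean, and it is Cauchy-complete in the metric induced by the uniform norm ‖f‖ = sup{|f(x)| : x ∈ X}. In particular, if a sequence of a-maps f_n : X → ℝ converges uniformly to a function f : X → ℝ, then f is an a-map, i.e., f is continuous and den(f(x)) divides ζ(x) for all x ∈ X. -/

import Mathlib

open Filter

open Classical in
/-- The denominator of a real number: the reduced denominator if rational, `0` if irrational. -/
noncomputable def den (r : ℝ) : ℕ :=
  if h : ∃ q : ℚ, (q : ℝ) = r then h.choose.den else 0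

/-- `C(X)`: the set of a-maps from the a-space `(X, ζ)` to `(ℝ, den)`. -/
def AMapSet {X : Type*} [TopologicalSpace X] (ζ : X → ℕ) : Set (X → ℝ) :=
  {f | Continuous f ∧ ∀ x, den (f x) ∣ ζ x}

lemma den_ratCast (q : ℚ) : den (q : ℝ) = q.den := by
  classical
  have h : ∃ q' : ℚ, (q' : ℝ) = (q : ℝ) := ⟨q, rfl⟩
  have : h.choose = q := by exact_mod_cast h.choose_spec
  simp [den, dif_pos h, this]

lemma den_dvd_iff (r : ℝ) (m : ℕ) (hm : m ≠ 0) :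
    den r ∣ m ↔ ∃ k : ℤ, (m : ℝ) * r = (k : ℝ) := by
  classical
  constructor
  · intro hdvd
    by_cases h : ∃ q : ℚ, (q : ℝ) = r
    · obtain ⟨q, hq⟩ := h
      rw [← hq, den_ratCast] at hdvd
      obtain ⟨c, hc⟩ := hdvd
      refine ⟨c * q.num, ?_⟩
      have hq' : (q : ℝ) = (q.num : ℝ) / (q.den : ℝ) := by
        exact_mod_cast congrArg (Rat.cast : ℚ → ℝ) (Rat.num_div_den q).symm
      have hden : (q.den : ℝ) ≠ 0 := by exact_mod_cast q.den_nz
      rw [← hq, hq', hc]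
      push_cast
      field_simp
    · exfalso
      have : den r = 0 := by simp [den, dif_neg h]
      rw [this] at hdvd
      exact hm (Nat.eq_zero_of_zero_dvd hdvd)
  · rintro ⟨k, hk⟩
    have hm' : (m : ℝ) ≠ 0 := by exact_mod_cast hm
    have hr : r = ((k / m : ℚ) : ℝ) := by
      push_cast
      field_simp at hk ⊢
      linarith [hk]
    rw [hr, den_ratCast]
    have := Rat.den_dvd k (m : ℤ)
    rw [Rat.divInt_eq_div] at this
    have h2 : ((k / (m : ℤ) : ℚ).den : ℤ) ∣ (m : ℤ) := by exact_mod_cast this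
    exact_mod_cast Int.ofNat_dvd.mp (by exact_mod_cast h2)

lemma den_dvd_of_tendsto {r : ℕ → ℝ} {l : ℝ} {m : ℕ}
    (hd : ∀ n, den (r n) ∣ m) (hl : Tendsto r atTop (nhds l)) : den l ∣ m := by
  rcases Nat.eq_zero_or_pos m with hm | hm
  · simp [hm]
  have hm' : m ≠ 0 := hm.ne'
  rw [den_dvd_iff _ _ hm']
  have hS : IsClosed {x : ℝ | ∃ k : ℤ, (m : ℝ) * x = (k : ℝ)} := by
    have : {x : ℝ | ∃ k : ℤ, (m : ℝ) * x = (k : ℝ)}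
        = (fun x : ℝ => (m : ℝ) * x) ⁻¹' (Set.range (Int.cast : ℤ → ℝ)) := by
      ext x; simp [Set.mem_preimage, eq_comm]
    rw [this]
    exact Int.isClosedEmbedding_coe_real.isClosed_range.preimage (by continuity)
  exact hS.mem_of_tendsto hl (Filter.Eventually.of_forall fun n =>
    (den_dvd_iff _ _ hm').mp (hd n))

/-- For a compact a-space `(X, ζ)`, the unital Abelian ℓ-group `C(X)`
of a-maps `X → (ℝ, den)` is metrically complete: it is Archimedean, every uniformly
Cauchy sequence of a-maps converges uniformly to an a-map, and a uniform limit of a-maps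
is an a-map. -/
theorem amaps_metrically_complete
    {X : Type*} [TopologicalSpace X] [CompactSpace X] (ζ : X → ℕ) :
    (∀ f ∈ AMapSet ζ, ∀ g ∈ AMapSet ζ,
      (∀ (n : ℕ) (x : X), (n : ℝ) * f x ≤ g x) → ∀ x : X, f x ≤ 0) ∧
    (∀ u : ℕ → X → ℝ, (∀ n, u n ∈ AMapSet ζ) →
      UniformCauchySeqOn u atTop Set.univ →
      ∃ f ∈ AMapSet ζ, TendstoUniformly u f atTop) ∧
    (∀ (u : ℕ → X → ℝ) (f : X → ℝ), (∀ n, u n ∈ AMapSet ζ) →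
      TendstoUniformly u f atTop → f ∈ AMapSet ζ) := by
  have part3 : ∀ (u : ℕ → X → ℝ) (f : X → ℝ), (∀ n, u n ∈ AMapSet ζ) →
      TendstoUniformly u f atTop → f ∈ AMapSet ζ := by
    intro u f hu hconv
    constructor
    · exact hconv.continuous (Filter.Eventually.of_forall fun n => (hu n).1).frequently
    · intro x
      exact den_dvd_of_tendsto (fun n => (hu n).2 x)
        (hconv.tendsto_at x)
  refine ⟨?_, ?_, part3⟩
  · intro f _ g _ h x
    by_contra hfx
    push_neg at hfx
    obtain ⟨n, hn⟩ := exists_nat_gt (g x / f x)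
    have := h n x
    have h2 : g x / f x < n := hn
    nlinarith [div_lt_iff₀ hfx |>.mp h2]
  · intro u hu hcauchy
    have hpt : ∀ x : X, ∃ l : ℝ, Tendsto (fun n => u n x) atTop (nhds l) := by
      intro x
      have : CauchySeq (fun n => u n x) :=
        hcauchy.cauchySeq (Set.mem_univ x)
      exact cauchySeq_tendsto_of_complete this
    choose f hf using hpt
    have hconv : TendstoUniformly u f atTop := by
      rw [← tendstoUniformlyOn_univ]
      exact hcauchy.tendstoUniformlyOn_of_tendsto fun x _ => hf x
    exact ⟨f, part3 u f hu hconv, hconv⟩
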